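/- arXiv:1004.5208 — 3 statements merged into one kernel-verified Lean document; each statement's English description precedes it below -/
import Mathlib

section
/- The number of heap-ordered forests with n vertices equals n!. -/
open scoped Classical

/-- An ordered rooted forest on vertex set `Fin n`: each vertex has at most one
parent, and the parent relation is acyclic.  The labels `0,…,n-1` of `Fin n`
play the role of the labels `1,…,n`. -/
structure OForest (n : ℕ) where
  parent : Fin n → Option (Fin n)
  acyclic : ∀ i, ¬ Relation.TransGen (fun a b => parent a = some b) i i

namespace OForest

/-- `F.desc i j` : there is an oriented path (toward the roots) from `i` to `j`,
i.e. `i` lies strictly above `j`. -/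
def desc {n : ℕ} (F : OForest n) : Fin n → Fin n → Prop :=
  Relation.TransGen (fun a b => F.parent a = some b)

/-- A forest is heap-ordered when `i ↠ j` implies `i > j`. -/
def HeapOrdered {n : ℕ} (F : OForest n) : Prop :=
  ∀ i j, F.desc i j → j < i

/-- A tree is a connected forest, i.e. it has exactly one root. -/
def IsTree {n : ℕ} (F : OForest n) : Prop :=
  ∃! r : Fin n, F.parent r = none

end OForest

/-- The set of forest-order-preserving symmetries of an ordered forest. -/
def SF {n : ℕ} (F : OForest n) : Set (Equiv.Perm (Fin n)) :=
  {σ | ∀ i j, F.desc i j → σ⁻¹ j < σ⁻¹ i}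

private lemma transGen_lt {n : ℕ} {p : Fin n → Option (Fin n)}
    (h : ∀ a b, p a = some b → b < a) :
    ∀ i j, Relation.TransGen (fun a b => p a = some b) i j → j < i := by
  intro i j hij
  induction hij with
  | single h' => exact h _ _ h'
  | tail _ h' ih => exact lt_trans (h _ _ h') ih

/-- A heap-ordered forest is the same as a choice of parent `< i` (or none)
for each vertex `i`. -/
noncomputable def heapEquiv (n : ℕ) :
    {F : OForest n // F.HeapOrdered} ≃ (∀ i : Fin n, Option (Fin i.val)) where
  toFun F i := (F.1.parent i).pmap (fun (j : Fin n) (hj : (j : ℕ) < i.val) => (⟨j, hj⟩ : Fin i.val))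
    (fun j hj => F.2 i j (Relation.TransGen.single hj))
  invFun g :=
    ⟨⟨fun i => (g i).map (fun j => ⟨j.val, j.isLt.trans i.isLt⟩), by
      intro i hi
      have hlt : ∀ a b : Fin n,
          (g a).map (fun j : Fin a.val => (⟨j.val, j.isLt.trans a.isLt⟩ : Fin n)) = some b
          → b < a := by
        intro a b hab
        rcases Option.map_eq_some_iff.1 hab with ⟨j, hj, rfl⟩
        exact j.isLt
      exact absurd (transGen_lt hlt i i hi) (lt_irrefl i)⟩, by
      intro i j hij
      exact transGen_lt (fun a b hab => by
        rcases Option.map_eq_some_iff.1 hab with ⟨k, hk, rfl⟩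
        exact k.isLt) i j hij⟩
  left_inv F := by
    apply Subtype.ext
    cases' F with F hF
    cases' F with p hac
    simp only [OForest.mk.injEq]
    funext i
    rw [Option.map_pmap]
    exact (Option.pmap_eq_map _ id (p i) _).trans (by simp)
  right_inv g := by
    funext i
    cases h : g i with
    | none => simp [h]
    | some j => simp [h]

/-- The number of heap-ordered forests with `n` vertices equals `n!`. -/
theorem statement1 (n : ℕ) :
    Nat.card {F : OForest n // F.HeapOrdered} = n.factorial := by
  rw [Nat.card_congr (heapEquiv n)]
  rw [Nat.card_eq_fintype_card, Fintype.card_pi]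
  simp only [Fintype.card_option, Fintype.card_fin]
  rw [Fin.prod_univ_eq_prod_range (fun i => i + 1)]
  exact Finset.prod_range_add_one_eq_factorial n
end

section
/- For any permutation σ of {1,...,n}, there exists a heap-ordered forest F with n vertices such that σ is the maximum, in lexicographic order on words (σ(1)...σ(n)), of the set S_F of forest-order-preserving symmetries of F. -/
open scoped Classical

def LexLT {n : ℕ} (σ τ : Equiv.Perm (Fin n)) : Prop :=
  ∃ i : Fin n, (∀ j, j < i → σ j = τ j) ∧ σ i < τ i

noncomputable def prt {n : ℕ} (σ : Equiv.Perm (Fin n)) (i : Fin n) : Option (Fin n) :=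
  if h : (Finset.univ.filter (fun j : Fin n => j < σ⁻¹ i ∧ σ j < i)).Nonempty then
    some (σ ((Finset.univ.filter (fun j : Fin n => j < σ⁻¹ i ∧ σ j < i)).max' h))
  else none

lemma prt_lt {n : ℕ} (σ : Equiv.Perm (Fin n)) {i p : Fin n} (h : prt σ i = some p) :
    p < i ∧ σ⁻¹ p < σ⁻¹ i := by
  unfold prt at h
  split_ifs at h with hne
  · have hp : p = σ ((Finset.univ.filter (fun j : Fin n => j < σ⁻¹ i ∧ σ j < i)).max' hne) :=
      (Option.some.injEq _ _ ▸ h).symm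
    have hm := Finset.max'_mem _ hne
    rw [Finset.mem_filter] at hm
    constructor
    · rw [hp]; exact hm.2.2
    · rw [hp, show ∀ x, σ⁻¹ (σ x) = x from σ.symm_apply_apply]; exact hm.2.1

lemma prt_ge {n : ℕ} (σ : Equiv.Perm (Fin n)) {i j : Fin n}
    (h1 : j < σ⁻¹ i) (h2 : σ j < i) :
    ∃ p, prt σ i = some p ∧ j ≤ σ⁻¹ p := by
  have hne : (Finset.univ.filter (fun k : Fin n => k < σ⁻¹ i ∧ σ k < i)).Nonempty :=
    ⟨j, Finset.mem_filter.mpr ⟨Finset.mem_univ _, h1, h2⟩⟩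
  refine ⟨σ ((Finset.univ.filter (fun k : Fin n => k < σ⁻¹ i ∧ σ k < i)).max' hne), ?_, ?_⟩
  · unfold prt; rw [dif_pos hne]
  · rw [show ∀ x, σ⁻¹ (σ x) = x from σ.symm_apply_apply]
    exact Finset.le_max' _ j (Finset.mem_filter.mpr ⟨Finset.mem_univ _, h1, h2⟩)

/-- For any permutation `σ` of `{1,…,n}` there is a heap-ordered forest `F`
with `n` vertices such that `σ` is the greatest element of `S_F` in
lexicographic order. -/
theorem statement5 (n : ℕ) (σ : Equiv.Perm (Fin n)) :
    ∃ F : OForest n, F.HeapOrdered ∧ σ ∈ SF F ∧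
      ∀ τ ∈ SF F, τ = σ ∨ LexLT τ σ := by
  have step_lt : ∀ a b : Fin n, prt σ a = some b → b < a ∧ σ⁻¹ b < σ⁻¹ a :=
    fun a b h => prt_lt σ h
  have tg_lt : ∀ a b : Fin n,
      Relation.TransGen (fun x y => prt σ x = some y) a b → b < a ∧ σ⁻¹ b < σ⁻¹ a := by
    intro a b h
    induction h with
    | single h => exact step_lt _ _ h
    | tail _ h ih =>
      have := step_lt _ _ h
      exact ⟨this.1.trans ih.1, this.2.trans ih.2⟩
  refine ⟨⟨prt σ, fun i hi => absurd (tg_lt i i hi).1 (lt_irrefl i)⟩, ?_, ?_, ?_⟩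
  · intro i j h; exact (tg_lt i j h).1
  · intro i j h; exact (tg_lt i j h).2
  · intro τ hτ
    by_cases hts : τ = σ
    · exact Or.inl hts
    right
    have hex : ∃ i : Fin n, τ i ≠ σ i := by
      by_contra hc
      push_neg at hc
      exact hts (Equiv.ext hc)
    let k := Finset.min' (Finset.univ.filter (fun i : Fin n => τ i ≠ σ i))
      ⟨hex.choose, by simp [hex.choose_spec]⟩
    have hk : τ k ≠ σ k := by
      have := Finset.min'_mem (Finset.univ.filter (fun i : Fin n => τ i ≠ σ i))
        ⟨hex.choose, by simp [hex.choose_spec]⟩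
      simpa using this
    have hagree : ∀ j, j < k → τ j = σ j := by
      intro j hj
      by_contra hc
      exact absurd (Finset.min'_le _ j (by simp [hc])) (not_le.mpr hj)
    refine ⟨k, hagree, ?_⟩
    rcases lt_or_gt_of_ne hk with h | h
    · exact h
    -- σ k < τ k : derive a contradiction
    exfalso
    set v := τ k with hv
    have hkv : k < σ⁻¹ v := by
      rcases lt_trichotomy (σ⁻¹ v) k with hlt | heq | hgt
      · have h1 : τ (σ⁻¹ v) = v := by rw [hagree _ hlt, Equiv.Perm.inv_def, Equiv.apply_symm_apply]
        exact absurd (τ.injective (h1.trans hv)) (ne_of_lt hlt)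
      · exact absurd (by rw [← heq, Equiv.Perm.inv_def, Equiv.apply_symm_apply] : v = σ k) hk
      · exact hgt
    obtain ⟨p, hp, hkp⟩ := prt_ge σ hkv (by simpa using h)
    have hdesc : Relation.TransGen (fun x y => prt σ x = some y) v p :=
      Relation.TransGen.single hp
    have htp : τ⁻¹ p < τ⁻¹ v := hτ v p hdesc
    have htv : τ⁻¹ v = k := by rw [hv, Equiv.Perm.inv_def, Equiv.symm_apply_apply]
    rw [htv] at htp
    have : τ (τ⁻¹ p) = σ (τ⁻¹ p) := hagree _ htp
    rw [Equiv.Perm.inv_def, Equiv.apply_symm_apply] at this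
    have h2 : σ⁻¹ p = τ⁻¹ p := σ.injective (by rw [Equiv.Perm.inv_def, Equiv.apply_symm_apply]; exact this)
    rw [h2] at hkp
    exact absurd (lt_of_le_of_lt hkp htp) (lt_irrefl k)
end

section
/- The restriction of Θ to the span of heap-ordered forests with n vertices is a linear isomorphism onto the span of Σ_n; equivalently, the n! × n! matrix whose (F, σ) entry is the indicator of σ ∈ S_F (F ranging over heap-ordered forests with n vertices) is invertible. -/
open scoped Classical

/-- A `(k,l)`-shuffle: a permutation of `Fin (k+l)` whose inverse is increasing
on the first `k` letters and on the last `l` letters. -/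
def IsShuffle (k l : ℕ) (ε : Equiv.Perm (Fin (k + l))) : Prop :=
  (∀ i j : Fin (k + l), i < j → (j : ℕ) < k → ε⁻¹ i < ε⁻¹ j) ∧
  (∀ i j : Fin (k + l), i < j → k ≤ (i : ℕ) → ε⁻¹ i < ε⁻¹ j)

/-- The block sum `σ ⊗ τ` of permutations, acting as `σ` on the first `k`
letters and as the shift of `τ` on the last `l` letters. -/
def blockSum {k l : ℕ} (σ : Equiv.Perm (Fin k)) (τ : Equiv.Perm (Fin l)) :
    Equiv.Perm (Fin (k + l)) :=
  finSumFinEquiv.permCongr (Equiv.sumCongr σ τ)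


/-- The map `Θ` on an ordered forest: the formal sum of the forest-order
preserving symmetries of `F`, as an element of the degree-`n` component of
`FQSym` (the free module on `Σ_n`). -/
noncomputable def ThetaF {n : ℕ} (F : OForest n) : Equiv.Perm (Fin n) →₀ ℚ :=
  ∑ σ ∈ Finset.univ.filter (fun σ => σ ∈ SF F), Finsupp.single σ 1

/-- The product of `FQSym` on homogeneous components, extending bilinearly
`σ · τ = Σ_{ε ∈ Sh(k,l)} (σ ⊗ τ) ∘ ε`. -/
noncomputable def fqMul {k l : ℕ} (x : Equiv.Perm (Fin k) →₀ ℚ)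
    (y : Equiv.Perm (Fin l) →₀ ℚ) : Equiv.Perm (Fin (k + l)) →₀ ℚ :=
  x.sum fun σ a => y.sum fun τ b =>
    (a * b) • ∑ ε ∈ Finset.univ.filter (fun ε => IsShuffle k l ε),
      Finsupp.single (blockSum σ τ * ε) 1

------------------------------------------------------------------------
-- auxiliary development
------------------------------------------------------------------------

namespace Statement17Aux

open Finset

variable {n : ℕ}

lemma transGen_lt {α : Type*} [Preorder α] {r : α → α → Prop}
    (h : ∀ a b, r a b → b < a) {i j : α} (hij : Relation.TransGen r i j) : j < i := by
  induction hij with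
  | single h' => exact h _ _ h'
  | tail _ h' ih => exact (h _ _ h').trans ih

lemma OForest.ext' {F G : OForest n} (h : F.parent = G.parent) : F = G := by
  cases F; cases G; cases h; rfl

/-- candidate positions for the parent of `v` in the forest of `σ` :
positions before that of `v` carrying a smaller value. -/
def cand (σ : Equiv.Perm (Fin n)) (v : Fin n) : Finset (Fin n) :=
  Finset.univ.filter fun q => q < σ⁻¹ v ∧ σ q < v

noncomputable def phiParent (σ : Equiv.Perm (Fin n)) (v : Fin n) : Option (Fin n) :=
  if h : (cand σ v).Nonempty then some (σ ((cand σ v).max' h)) else none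

lemma phiParent_step {σ : Equiv.Perm (Fin n)} {v u : Fin n}
    (h : phiParent σ v = some u) : σ⁻¹ u < σ⁻¹ v ∧ u < v := by
  unfold phiParent at h
  split_ifs at h with hne
  · injection h with h
    subst h
    obtain ⟨hlt, hval⟩ := (Finset.mem_filter.mp ((cand σ v).max'_mem hne)).2
    exact ⟨by simpa using hlt, hval⟩

lemma phi_desc_aux {σ : Equiv.Perm (Fin n)} {i j : Fin n}
    (h : Relation.TransGen (fun a b => phiParent σ a = some b) i j) :
    j < i ∧ σ⁻¹ j < σ⁻¹ i := by
  induction h with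
  | single h' => exact ⟨(phiParent_step h').2, (phiParent_step h').1⟩
  | tail _ h' ih => exact ⟨(phiParent_step h').2.trans ih.1, (phiParent_step h').1.trans ih.2⟩

noncomputable def phi (σ : Equiv.Perm (Fin n)) : OForest n where
  parent := phiParent σ
  acyclic := fun i h => lt_irrefl i (phi_desc_aux h).1

lemma phi_heap (σ : Equiv.Perm (Fin n)) : (phi σ).HeapOrdered :=
  fun _ _ h => (phi_desc_aux h).1

lemma self_mem_SF_phi (σ : Equiv.Perm (Fin n)) : σ ∈ SF (phi σ) :=
  fun _ _ h => (phi_desc_aux h).2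

/-- strict lexicographic comparison of permutations via their one-line words. -/
def lexLt (σ τ : Equiv.Perm (Fin n)) : Prop :=
  Pi.Lex (· < ·) (fun {_} => (· < ·)) ⇑σ ⇑τ

lemma lexLt_irrefl (σ : Equiv.Perm (Fin n)) : ¬ lexLt σ σ :=
  fun ⟨k, _, hk⟩ => lt_irrefl _ hk

lemma lexLt_trans {a b c : Equiv.Perm (Fin n)} (h1 : lexLt a b) (h2 : lexLt b c) :
    lexLt a c := by
  obtain ⟨N₁, lt_N₁, a_lt_b⟩ := h1
  obtain ⟨N₂, lt_N₂, b_lt_c⟩ := h2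
  rcases lt_trichotomy N₁ N₂ with (H | rfl | H)
  exacts [⟨N₁, fun j hj => (lt_N₁ _ hj).trans (lt_N₂ _ <| hj.trans H), lt_N₂ _ H ▸ a_lt_b⟩,
    ⟨N₁, fun j hj => (lt_N₁ _ hj).trans (lt_N₂ _ hj), a_lt_b.trans b_lt_c⟩,
    ⟨N₂, fun j hj => (lt_N₁ _ (hj.trans H)).trans (lt_N₂ _ hj), (lt_N₁ _ H).symm ▸ b_lt_c⟩]

lemma lexLt_asymm {a b : Equiv.Perm (Fin n)} (h1 : lexLt a b) (h2 : lexLt b a) : False :=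
  lexLt_irrefl a (lexLt_trans h1 h2)

/-- key triangularity: every linear extension of `phi σ` is lexicographically
at most `σ`. -/
lemma key_max {σ τ : Equiv.Perm (Fin n)} (hτ : τ ∈ SF (phi σ)) :
    τ = σ ∨ lexLt τ σ := by
  rcases eq_or_ne τ σ with rfl | hne
  · exact Or.inl rfl
  right
  have hfne : ⇑τ ≠ ⇑σ := fun h => hne (Equiv.coe_fn_injective h)
  have hs : (Finset.univ.filter fun p : Fin n => τ p ≠ σ p).Nonempty := by
    by_contra h
    rw [Finset.not_nonempty_iff_eq_empty, Finset.filter_eq_empty_iff] at h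
    exact hfne (funext fun p => by simpa using h (Finset.mem_univ p))
  set p := Finset.min' _ hs with hp
  have hpne : τ p ≠ σ p := by
    have := Finset.min'_mem _ hs
    rw [Finset.mem_filter] at this
    exact this.2
  have hagree : ∀ q, q < p → τ q = σ q := by
    intro q hq
    by_contra hq'
    exact absurd (Finset.min'_le _ q (Finset.mem_filter.mpr ⟨Finset.mem_univ _, hq'⟩))
      (not_le.mpr hq)
  have hlt : τ p < σ p := by
    rcases lt_trichotomy (τ p) (σ p) with h | h | h
    · exact h
    · exact absurd h hpne
    · exfalso
      -- write u = τ p ; u appears later than position p in σ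
      set u := τ p with hu
      have hune : σ⁻¹ u ≠ p := by
        intro he
        apply hpne
        rw [← he, Equiv.Perm.coe_inv, Equiv.apply_symm_apply]
      have hunl : ¬ σ⁻¹ u < p := by
        intro hl
        have h1 : τ (σ⁻¹ u) = σ (σ⁻¹ u) := hagree _ hl
        rw [show σ (σ⁻¹ u) = u from σ.apply_symm_apply u] at h1
        have : σ⁻¹ u = p := τ.injective (by rw [h1, hu])
        exact hune this
      have hpu : p < σ⁻¹ u := lt_of_le_of_ne (not_lt.mp hunl) (Ne.symm hune)
      have hpmem : p ∈ cand σ u :=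
        Finset.mem_filter.mpr ⟨Finset.mem_univ _, hpu, h⟩
      have hnemax : (cand σ u).Nonempty := ⟨p, hpmem⟩
      set q₁ := (cand σ u).max' hnemax with hq₁def
      have hpar : phiParent σ u = some (σ q₁) := dif_pos hnemax
      have hq₁ : p ≤ q₁ := Finset.le_max' _ p hpmem
      have hdesc : (phi σ).desc u (σ q₁) := Relation.TransGen.single hpar
      have h2 : τ⁻¹ (σ q₁) < τ⁻¹ u := hτ u (σ q₁) hdesc
      have hτu : τ⁻¹ u = p := by rw [hu, Equiv.Perm.coe_inv, Equiv.symm_apply_apply]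
      rw [hτu] at h2
      have h3 : τ (τ⁻¹ (σ q₁)) = σ (τ⁻¹ (σ q₁)) := hagree _ h2
      rw [Equiv.Perm.coe_inv, Equiv.apply_symm_apply] at h3
      have h4 : q₁ = τ⁻¹ (σ q₁) := σ.injective h3
      rw [← h4] at h2
      exact absurd hq₁ (not_le.mpr h2)
  exact ⟨p, fun j hj => hagree j hj, hlt⟩

lemma phi_injective : Function.Injective (phi (n := n)) := by
  intro σ τ h
  have h1 : σ ∈ SF (phi τ) := h ▸ self_mem_SF_phi σ
  have h2 : τ ∈ SF (phi σ) := h.symm ▸ self_mem_SF_phi τ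
  rcases key_max h1 with h1' | h1'
  · exact h1'
  rcases key_max h2 with h2' | h2'
  · exact h2'.symm
  exact absurd (lexLt_trans h1' h2') (lexLt_irrefl σ)

end Statement17Aux

namespace Statement17Aux

variable {n : ℕ}

/-- heap-ordered forests are determined by freely choosing, for each vertex
`i`, either no parent or a parent among the `i` smaller vertices. -/
noncomputable def heapEquiv :
    {F : OForest n // F.HeapOrdered} ≃ (∀ i : Fin n, Option (Fin i.val)) where
  toFun F i := (F.1.parent i).pmap
    (fun j (hj : j < i) => (⟨j.val, hj⟩ : Fin i.val))
    (fun j hj => F.2 i j (Relation.TransGen.single hj))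
  invFun g :=
    ⟨{ parent := fun i => (g i).map fun j => ⟨j.val, j.isLt.trans i.isLt⟩
       acyclic := fun i h => by
        refine lt_irrefl i (transGen_lt ?_ h)
        intro a b hab
        rcases Option.map_eq_some_iff.mp hab with ⟨j, _, rfl⟩
        exact j.isLt },
     by
      intro i j h
      refine transGen_lt ?_ h
      intro a b hab
      rcases Option.map_eq_some_iff.mp hab with ⟨j', _, rfl⟩
      exact j'.isLt⟩
  left_inv F := by
    apply Subtype.ext
    apply OForest.ext'
    funext i
    cases h : F.1.parent i with
    | none => simp [h]
    | some j => simp [h]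
  right_inv g := by
    funext i
    cases h : g i with
    | none => simp [h]
    | some j => simp [h]

noncomputable instance : Fintype {F : OForest n // F.HeapOrdered} :=
  Fintype.ofEquiv _ (heapEquiv (n := n)).symm

lemma card_heap : Fintype.card {F : OForest n // F.HeapOrdered} = Nat.factorial n := by
  rw [Fintype.card_congr (heapEquiv (n := n)), Fintype.card_pi]
  have : ∀ i : Fin n, Fintype.card (Option (Fin i.val)) = i.val + 1 := by
    intro i; simp
  rw [Finset.prod_congr rfl fun i _ => this i]
  rw [Fin.prod_univ_eq_prod_range (fun i => i + 1) n]
  exact Finset.prod_range_add_one_eq_factorial n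

noncomputable def phiH (σ : Equiv.Perm (Fin n)) : {F : OForest n // F.HeapOrdered} :=
  ⟨phi σ, phi_heap σ⟩

lemma phiH_bijective : Function.Bijective (phiH (n := n)) := by
  rw [Fintype.bijective_iff_injective_and_card]
  constructor
  · intro a b h
    exact phi_injective (congrArg Subtype.val h)
  · rw [card_heap, Fintype.card_perm, Fintype.card_fin]

lemma theta_apply (F : OForest n) (b : Equiv.Perm (Fin n)) :
    ThetaF F b = if b ∈ SF F then 1 else 0 := by
  unfold ThetaF
  rw [Finset.sum_apply']
  rw [Finset.sum_congr rfl fun σ _ => Finsupp.single_apply (a := σ) (a' := b) (b := (1 : ℚ))]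
  rw [Finset.sum_ite_eq' (Finset.univ.filter fun σ => σ ∈ SF F) b (fun _ => (1 : ℚ))]
  simp

noncomputable def eH (n : ℕ) : Equiv.Perm (Fin n) ≃ {F : OForest n // F.HeapOrdered} :=
  Equiv.ofBijective _ phiH_bijective

lemma eH_symm_spec (i : {F : OForest n // F.HeapOrdered}) :
    i.1 = phi ((eH n).symm i) :=
  (congrArg Subtype.val ((eH n).apply_symm_apply i)).symm

/-- the number of permutations lexicographically below `σ`. -/
noncomputable def μ (σ : Equiv.Perm (Fin n)) : ℕ :=
  (Finset.univ.filter fun τ : Equiv.Perm (Fin n) => lexLt τ σ).card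

lemma mu_lt {b σ : Equiv.Perm (Fin n)} (h : lexLt b σ) : μ b < μ σ := by
  apply Finset.card_lt_card
  rw [Finset.ssubset_iff_of_subset]
  · refine ⟨b, Finset.mem_filter.mpr ⟨Finset.mem_univ _, h⟩, ?_⟩
    rw [Finset.mem_filter]
    rintro ⟨-, hbb⟩
    exact lexLt_irrefl b hbb
  · intro τ hτ
    rw [Finset.mem_filter] at hτ ⊢
    exact ⟨hτ.1, lexLt_trans hτ.2 h⟩

end Statement17Aux


open Statement17Aux in
/-- The family `(Θ(F))`, `F` ranging over heap-ordered forests with `n`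
vertices, is linearly independent and spans the span of `Σ_n`: the restriction
of `Θ` to heap-ordered forests is a linear isomorphism onto the degree-`n`
component of `FQSym`. -/
theorem statement17 (n : ℕ) :
    LinearIndependent ℚ
      (fun F : {F : OForest n // F.HeapOrdered} => ThetaF F.1) ∧
    Submodule.span ℚ
      (Set.range fun F : {F : OForest n // F.HeapOrdered} => ThetaF F.1) = ⊤ := by
  constructor
  · -- linear independence
    rw [Fintype.linearIndependent_iff]
    intro g hg
    by_contra hcon
    push_neg at hcon
    obtain ⟨i₁, hi₁⟩ := hcon
    have hs : (Finset.univ.filter fun i : {F : OForest n // F.HeapOrdered} => g i ≠ 0).Nonempty :=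
      ⟨i₁, Finset.mem_filter.mpr ⟨Finset.mem_univ _, hi₁⟩⟩
    obtain ⟨i0, hi0mem, hi0max⟩ :=
      Finset.exists_max_image _ (fun i => μ ((eH n).symm i)) hs
    have hgi0 : g i0 ≠ 0 := (Finset.mem_filter.mp hi0mem).2
    set m0 := (eH n).symm i0 with hm0
    have h0 : (∑ i, g i • ThetaF i.1) m0 = 0 := by rw [hg]; rfl
    rw [Finset.sum_apply'] at h0
    have hterm : ∀ i : {F : OForest n // F.HeapOrdered}, i ∈ Finset.univ → i ≠ i0 →
        (g i • ThetaF i.1) m0 = 0 := by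
      intro i _ hne
      rw [Finsupp.smul_apply, smul_eq_mul]
      by_cases hgi : g i = 0
      · rw [hgi, zero_mul]
      · rw [theta_apply, if_neg, mul_zero]
        intro hmem
        rw [eH_symm_spec i] at hmem
        rcases key_max hmem with h1 | h1
        · exact hne ((eH n).symm.injective h1).symm
        · have h2 : μ ((eH n).symm i) ≤ μ m0 :=
            hi0max i (Finset.mem_filter.mpr ⟨Finset.mem_univ _, hgi⟩)
          exact absurd (mu_lt h1) (not_lt.mpr h2)
    rw [Finset.sum_eq_single_of_mem i0 (Finset.mem_univ _) hterm] at h0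
    rw [Finsupp.smul_apply, smul_eq_mul, eH_symm_spec i0, theta_apply,
      if_pos (self_mem_SF_phi m0), mul_one] at h0
    exact hgi0 h0
  · -- spanning
    set W := Submodule.span ℚ
      (Set.range fun F : {F : OForest n // F.HeapOrdered} => ThetaF F.1) with hW
    have hsingle : ∀ k (σ : Equiv.Perm (Fin n)), μ σ = k → Finsupp.single σ 1 ∈ W := by
      intro k
      induction k using Nat.strong_induction_on with
      | _ k IH =>
        intro σ hk
        have hTin : ThetaF (phi σ) ∈ W := Submodule.subset_span ⟨phiH σ, rfl⟩
        have hσ1 : ThetaF (phi σ) σ = 1 := by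
          rw [theta_apply, if_pos (self_mem_SF_phi σ)]
        have hσsupp : σ ∈ (ThetaF (phi σ)).support :=
          Finsupp.mem_support_iff.mpr (by rw [hσ1]; norm_num)
        have hsum : ThetaF (phi σ) = Finsupp.single σ 1 +
            ∑ b ∈ (ThetaF (phi σ)).support.erase σ,
              Finsupp.single b (ThetaF (phi σ) b) := by
          conv_lhs => rw [← Finsupp.sum_single (ThetaF (phi σ)), Finsupp.sum]
          rw [← Finset.add_sum_erase _ _ hσsupp, hσ1]
        have hkey : Finsupp.single σ 1 = ThetaF (phi σ) -
            ∑ b ∈ (ThetaF (phi σ)).support.erase σ,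
              Finsupp.single b (ThetaF (phi σ) b) :=
          eq_sub_of_add_eq hsum.symm
        rw [hkey]
        refine Submodule.sub_mem _ hTin (Submodule.sum_mem _ ?_)
        intro b hb
        have hbne : b ≠ σ := Finset.ne_of_mem_erase hb
        have hbsupp : ThetaF (phi σ) b ≠ 0 :=
          Finsupp.mem_support_iff.mp (Finset.mem_of_mem_erase hb)
        have hbmem : b ∈ SF (phi σ) := by
          by_contra h
          rw [theta_apply, if_neg h] at hbsupp
          exact hbsupp rfl
        have hblt : lexLt b σ := (key_max hbmem).resolve_left hbne
        have hmem1 : Finsupp.single b 1 ∈ W := IH (μ b) (hk ▸ mu_lt hblt) b rfl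
        have := Submodule.smul_mem W (ThetaF (phi σ) b) hmem1
        rwa [Finsupp.smul_single, smul_eq_mul, mul_one] at this
    rw [eq_top_iff]
    intro x hx
    clear hx
    induction x using Finsupp.induction with
    | zero => exact Submodule.zero_mem _
    | single_add a c f haf hc ih =>
      refine Submodule.add_mem _ ?_ ih
      have := Submodule.smul_mem W c (hsingle (μ a) a rfl)
      rwa [Finsupp.smul_single, smul_eq_mul, mul_one] at this
end
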